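/- Consider the delayed Cucker-Smale system dx_i/dt = v_i, dv_i/dt = (1/h(t)) ∑_{k=1}^N ∫_{t−τ(t)}^t α(t−s) φ(x_k(s), x_i(t)) (v_k(s) − v_i(t)) ds with normalized weights φ (so ∑_k φ(x_k(s), x_i(t)) = 1 and φ ≥ 0), and continuous initial data on [−τ₀, 0] with R_v = max_{s∈[−τ₀,0]} max_i |v_i^0(s)|. Then any local C¹ solution is global and satisfies max_{1≤i≤N} |v_i(t)| ≤ R_v for all t ≥ −τ₀. -/

import Mathlib

open MeasureTheory Set Finset

theorem uniform_speed_bound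
    {d : ℕ} (N : ℕ) (hN : 2 ≤ N)
    (τ₀ τstar : ℝ) (hτstar : 0 < τstar) (hττ : τstar ≤ τ₀)
    (τ : ℝ → ℝ) (hτrange : ∀ t : ℝ, 0 ≤ t → τ t ∈ Icc τstar τ₀)
    (hτmono : AntitoneOn τ (Ici 0))
    (α : ℝ → ℝ) (hα : ∀ s : ℝ, 0 ≤ α s)
    (hαint : IntegrableOn α (Icc 0 τ₀))
    (hαpos : 0 < ∫ s in Ioc (0 : ℝ) τstar, α s)
    (h : ℝ → ℝ) (hdef : ∀ t : ℝ, h t = ∫ s in Ioc (0 : ℝ) (τ t), α s)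
    (ψ : ℝ → ℝ) (hψpos : ∀ r : ℝ, 0 < ψ r) (hψb : ∀ r : ℝ, ψ r ≤ 1)
    (hψmono : Antitone ψ) (hψ0 : ψ 0 = 1)
    (x v : Fin N → ℝ → EuclideanSpace ℝ (Fin d))
    (φ : Fin N → Fin N → ℝ → ℝ → ℝ)
    (hφ : ∀ k i : Fin N, ∀ s t : ℝ, φ k i s t =
      if k = i then 0
      else ψ ‖x k s - x i t‖ /
        ∑ j ∈ Finset.univ.filter (fun j => j ≠ i), ψ ‖x j s - x i t‖)
    (hcont : ∀ i : Fin N, ContinuousOn (x i) (Ici (-τ₀)) ∧ ContinuousOn (v i) (Ici (-τ₀)))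
    (hx : ∀ i : Fin N, ∀ t : ℝ, 0 < t → HasDerivAt (x i) (v i t) t)
    (hv : ∀ i : Fin N, ∀ t : ℝ, 0 < t → HasDerivAt (v i)
      ((h t)⁻¹ • ∑ k : Fin N,
        ∫ s in Ioc (t - τ t) t, (α (t - s) * φ k i s t) • (v k s - v i t)) t)
    (Rv : ℝ)
    (hRv : IsGreatest {r : ℝ | ∃ i : Fin N, ∃ s ∈ Icc (-τ₀) (0 : ℝ), r = ‖v i s‖} Rv) :
    ∀ t : ℝ, -τ₀ ≤ t → ∀ i : Fin N, ‖v i t‖ ≤ Rv := by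
  have hτ0pos : (0:ℝ) < τ₀ := lt_of_lt_of_le hτstar hττ
  have hNe : Nonempty (Fin N) := ⟨⟨0, by omega⟩⟩
  have hinit : ∀ s ∈ Icc (-τ₀) (0:ℝ), ∀ i, ‖v i s‖ ≤ Rv := fun s hs i =>
    hRv.2 ⟨i, s, hs, rfl⟩
  have hRv0 : 0 ≤ Rv := by
    obtain ⟨i⟩ := hNe
    exact le_trans (norm_nonneg (v i 0))
      (hinit 0 ⟨neg_nonpos.mpr hτ0pos.le, le_refl 0⟩ i)
  -- positivity of h
  have hhpos : ∀ t : ℝ, 0 ≤ t → 0 < h t := by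
    intro t ht
    rw [hdef]
    have hsub : Ioc (0:ℝ) (τ t) ⊆ Icc 0 τ₀ := fun u hu =>
      ⟨hu.1.le, hu.2.trans (hτrange t ht).2⟩
    refine lt_of_lt_of_le hαpos (setIntegral_mono_set (hαint.mono_set hsub) ?_ ?_)
    · filter_upwards with s using hα s
    · filter_upwards with s hs using ⟨hs.1, hs.2.trans (hτrange t ht).1⟩
  -- φ facts
  have hDpos : ∀ (i : Fin N) (s t : ℝ),
      0 < ∑ j ∈ Finset.univ.filter (fun j => j ≠ i), ψ ‖x j s - x i t‖ := by
    intro i s t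
    have : Nontrivial (Fin N) := Fin.nontrivial_iff_two_le.mpr hN
    obtain ⟨j, hj⟩ := exists_ne i
    refine Finset.sum_pos (fun j _ => hψpos _) ⟨j, ?_⟩
    simp [hj]
  have hφnonneg : ∀ (k i : Fin N) (s t : ℝ), 0 ≤ φ k i s t := by
    intro k i s t
    rw [hφ]
    split
    · exact le_refl 0
    · exact div_nonneg (hψpos _).le (hDpos i s t).le
  have hφle : ∀ (k i : Fin N) (s t : ℝ), φ k i s t ≤ 1 := by
    intro k i s t
    rw [hφ]
    split
    · exact zero_le_one
    · rename_i hk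
      rw [div_le_one (hDpos i s t)]
      exact Finset.single_le_sum (f := fun j => ψ ‖x j s - x i t‖)
        (fun j _ => (hψpos _).le) (by simp [hk])
  have hφsum : ∀ (i : Fin N) (s t : ℝ), ∑ k : Fin N, φ k i s t = 1 := by
    intro i s t
    have : ∀ k : Fin N, φ k i s t =
        if k ≠ i then ψ ‖x k s - x i t‖ /
          ∑ j ∈ Finset.univ.filter (fun j => j ≠ i), ψ ‖x j s - x i t‖ else 0 := by
      intro k
      rw [hφ]
      by_cases hk : k = i <;> simp [hk]
    simp_rw [this]
    rw [← Finset.sum_filter, ← Finset.sum_div, div_self (hDpos i s t).ne']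
  -- key derivative bound
  have key : ∀ (M : ℝ), 0 ≤ M → ∀ (t : ℝ), 0 < t → ∀ i : Fin N,
      (∀ k : Fin N, ∀ u ∈ Icc (t - τ t) t, ‖v k u‖ ≤ M) →
      ‖v i t + (h t)⁻¹ • ∑ k : Fin N,
        ∫ s in Ioc (t - τ t) t, (α (t - s) * φ k i s t) • (v k s - v i t)‖ ≤ M := by
    intro M hM t ht i hbound
    obtain ⟨hτ1, hτ2⟩ := hτrange t ht.le
    have hτtpos : 0 < τ t := lt_of_lt_of_le hτstar hτ1
    have hle : t - τ t ≤ t := by linarith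
    have hIIcc : Ioc (t - τ t) t ⊆ Icc (t - τ t) t := Ioc_subset_Icc_self
    have hIci : Icc (t - τ t) t ⊆ Ici (-τ₀) := fun u hu => le_trans (by linarith) hu.1
    have hmeasI : MeasurableSet (Ioc (t - τ t) t) := measurableSet_Ioc
    -- integrability of s ↦ α (t - s)
    have hA : IntegrableOn (fun s => α (t - s)) (Ioc (t - τ t) t) := by
      have h1 : IntervalIntegrable α volume 0 (τ t) := by
        rw [intervalIntegrable_iff_integrableOn_Ioc_of_le hτtpos.le]
        exact hαint.mono_set (fun u hu => ⟨hu.1.le, hu.2.trans hτ2⟩)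
      have h2 := (h1.comp_sub_left t).symm
      rw [sub_zero] at h2
      rwa [intervalIntegrable_iff_integrableOn_Ioc_of_le hle] at h2
    -- measurability of φ
    have hφm : ∀ k : Fin N, AEMeasurable (fun s => φ k i s t)
        (volume.restrict (Ioc (t - τ t) t)) := by
      intro k
      have hxm : ∀ j : Fin N, AEMeasurable (fun s => ψ ‖x j s - x i t‖)
          (volume.restrict (Ioc (t - τ t) t)) := by
        intro j
        refine hψmono.measurable.comp_aemeasurable ?_
        exact (((hcont j).1.mono (hIIcc.trans hIci)).sub
          continuousOn_const).norm.aemeasurable hmeasI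
      have hden : AEMeasurable
          (fun s => ∑ j ∈ Finset.univ.filter (fun j => j ≠ i), ψ ‖x j s - x i t‖)
          (volume.restrict (Ioc (t - τ t) t)) :=
        Finset.aemeasurable_fun_sum _ (fun j _ => hxm j)
      by_cases hk : k = i
      · simp_rw [hφ, if_pos hk]
        exact aemeasurable_const
      · simp_rw [hφ, if_neg hk]
        exact (hxm k).div hden
    -- integrability of the scalar weight
    have hint1 : ∀ k : Fin N, IntegrableOn (fun s => α (t - s) * φ k i s t)
        (Ioc (t - τ t) t) := by
      intro k
      refine Integrable.mono hA
        ((hA.aemeasurable.mul (hφm k)).aestronglyMeasurable) ?_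
      filter_upwards with s
      have h1 : 0 ≤ α (t - s) * φ k i s t := mul_nonneg (hα _) (hφnonneg k i s t)
      rw [Real.norm_eq_abs, Real.norm_eq_abs, abs_of_nonneg h1, abs_of_nonneg (hα _)]
      calc α (t - s) * φ k i s t ≤ α (t - s) * 1 :=
        mul_le_mul_of_nonneg_left (hφle k i s t) (hα _)
      _ = α (t - s) := mul_one _
    have hvmeas : ∀ k : Fin N, AEStronglyMeasurable (v k)
        (volume.restrict (Ioc (t - τ t) t)) := fun k =>
      ((hcont k).2.mono (hIIcc.trans hIci)).aestronglyMeasurable hmeasI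
    -- integrability of the vector integrands
    have hint2 : ∀ k : Fin N, IntegrableOn (fun s => (α (t - s) * φ k i s t) • v k s)
        (Ioc (t - τ t) t) := by
      intro k
      refine Integrable.mono (hA.mul_const M)
        (((hA.aemeasurable.mul (hφm k)).aestronglyMeasurable).smul (hvmeas k)) ?_
      filter_upwards [ae_restrict_mem hmeasI] with s hs
      have h1 : 0 ≤ α (t - s) * φ k i s t := mul_nonneg (hα _) (hφnonneg k i s t)
      rw [norm_smul, Real.norm_eq_abs, Real.norm_eq_abs, abs_of_nonneg h1,
        abs_of_nonneg (mul_nonneg (hα _) hM)]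
      calc α (t - s) * φ k i s t * ‖v k s‖ ≤ α (t - s) * 1 * M := by
            apply mul_le_mul
            · exact mul_le_mul_of_nonneg_left (hφle k i s t) (hα _)
            · exact hbound k s (hIIcc hs)
            · exact norm_nonneg _
            · exact mul_nonneg (hα _) zero_le_one
      _ = α (t - s) * M := by ring
    have hint3 : ∀ k : Fin N,
        IntegrableOn (fun s => (α (t - s) * φ k i s t) • (v k s - v i t))
        (Ioc (t - τ t) t) := by
      intro k
      have : (fun s => (α (t - s) * φ k i s t) • (v k s - v i t)) =
          fun s => (α (t - s) * φ k i s t) • v k s -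
            (fun s => (α (t - s) * φ k i s t) • v i t) s := by
        funext s; rw [smul_sub]
      rw [this]
      exact (hint2 k).sub ((hint1 k).smul_const (v i t))
    -- the total scalar mass is h t
    have hmass : ∑ k : Fin N, ∫ s in Ioc (t - τ t) t, α (t - s) * φ k i s t = h t := by
      rw [← integral_finset_sum _ (fun k _ => hint1 k)]
      have hpt : ∀ s : ℝ, ∑ k : Fin N, α (t - s) * φ k i s t = α (t - s) := by
        intro s
        rw [← Finset.mul_sum, hφsum, mul_one]
      simp_rw [hpt]
      rw [← intervalIntegral.integral_of_le hle,
        intervalIntegral.integral_comp_sub_left α t]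
      simp only [sub_self, sub_sub_cancel]
      rw [intervalIntegral.integral_of_le hτtpos.le, hdef]
    -- split the sum
    have hsplit : ∑ k : Fin N,
        ∫ s in Ioc (t - τ t) t, (α (t - s) * φ k i s t) • (v k s - v i t) =
        (∑ k : Fin N, ∫ s in Ioc (t - τ t) t, (α (t - s) * φ k i s t) • v k s)
          - (h t) • v i t := by
      rw [← hmass, Finset.sum_smul, ← Finset.sum_sub_distrib]
      refine Finset.sum_congr rfl (fun k _ => ?_)
      have : (fun s => (α (t - s) * φ k i s t) • (v k s - v i t)) =
          fun s => (α (t - s) * φ k i s t) • v k s -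
            (fun s => (α (t - s) * φ k i s t) • v i t) s := by
        funext s; rw [smul_sub]
      rw [this, integral_sub (hint2 k) ((hint1 k).smul_const (v i t)),
        integral_smul_const]
    have hne : h t ≠ 0 := (hhpos t ht.le).ne'
    rw [hsplit, smul_sub, smul_smul, inv_mul_cancel₀ hne, one_smul, add_sub_cancel]
    -- norm estimate
    rw [norm_smul, Real.norm_eq_abs, abs_of_pos (inv_pos.mpr (hhpos t ht.le))]
    have hS : ‖∑ k : Fin N, ∫ s in Ioc (t - τ t) t, (α (t - s) * φ k i s t) • v k s‖
        ≤ h t * M := by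
      calc ‖∑ k : Fin N, ∫ s in Ioc (t - τ t) t, (α (t - s) * φ k i s t) • v k s‖
          ≤ ∑ k : Fin N, ‖∫ s in Ioc (t - τ t) t, (α (t - s) * φ k i s t) • v k s‖ :=
            norm_sum_le _ _
        _ ≤ ∑ k : Fin N, ∫ s in Ioc (t - τ t) t, (α (t - s) * φ k i s t) * M := by
            refine Finset.sum_le_sum (fun k _ => ?_)
            refine le_trans (norm_integral_le_integral_norm _) ?_
            refine setIntegral_mono_on (hint2 k).norm ((hint1 k).mul_const M)
              hmeasI (fun s hs => ?_)
            have h1 : 0 ≤ α (t - s) * φ k i s t := mul_nonneg (hα _) (hφnonneg k i s t)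
            rw [norm_smul, Real.norm_eq_abs, abs_of_nonneg h1]
            exact mul_le_mul_of_nonneg_left (hbound k s (hIIcc hs)) h1
        _ = (∑ k : Fin N, ∫ s in Ioc (t - τ t) t, α (t - s) * φ k i s t) * M := by
            rw [Finset.sum_mul]
            refine Finset.sum_congr rfl (fun k _ => ?_)
            rw [← integral_mul_const]
        _ = h t * M := by rw [hmass]
    calc (h t)⁻¹ * ‖∑ k : Fin N, ∫ s in Ioc (t - τ t) t, (α (t - s) * φ k i s t) • v k s‖
        ≤ (h t)⁻¹ * (h t * M) :=
          mul_le_mul_of_nonneg_left hS (inv_pos.mpr (hhpos t ht.le)).le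
      _ = M := by field_simp
  -- Gronwall step
  have gron : ∀ (M : ℝ), 0 ≤ M → ∀ a b : ℝ, 0 < a →
      (∀ s ∈ Icc (-τ₀) b, ∀ k : Fin N, ‖v k s‖ ≤ M) →
      ∀ i : Fin N, ∀ t ∈ Icc a b,
        ‖v i t‖ ≤ M - Real.exp (a - t) * (M - ‖v i a‖) := by
    intro M hM a b ha hbound i t htab
    have hIab : Icc a b ⊆ Ici (-τ₀) := fun u hu => le_trans (by linarith) hu.1
    set f : ℝ → EuclideanSpace ℝ (Fin d) := fun s => Real.exp s • v i s with hf
    set g : ℝ → EuclideanSpace ℝ (Fin d) := fun s =>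
      (h s)⁻¹ • ∑ k : Fin N,
        ∫ u in Ioc (s - τ s) s, (α (s - u) * φ k i u s) • (v k u - v i s) with hg
    have hfc : ContinuousOn f (Icc a b) :=
      (Real.continuous_exp.continuousOn).smul ((hcont i).2.mono hIab)
    have hfd : ∀ s ∈ Ico a b, HasDerivWithinAt f
        (Real.exp s • g s + Real.exp s • v i s) (Ici s) s := by
      intro s hs
      have hs0 : 0 < s := lt_of_lt_of_le ha hs.1
      exact ((Real.hasDerivAt_exp s).smul (hv i s hs0)).hasDerivWithinAt
    have hB : ∀ s : ℝ, HasDerivAt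
        (fun s => M * Real.exp s - Real.exp a * (M - ‖v i a‖)) (M * Real.exp s) s :=
      fun s => ((Real.hasDerivAt_exp s).const_mul M).sub_const _
    have hfa : ‖f a‖ ≤ M * Real.exp a - Real.exp a * (M - ‖v i a‖) := by
      rw [hf]
      simp only [norm_smul, Real.norm_eq_abs, abs_of_pos (Real.exp_pos a)]
      nlinarith [Real.exp_pos a]
    have hbd : ∀ s ∈ Ico a b, ‖Real.exp s • g s + Real.exp s • v i s‖ ≤ M * Real.exp s := by
      intro s hs
      have hs0 : 0 < s := lt_of_lt_of_le ha hs.1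
      have hIcc : ∀ k : Fin N, ∀ u ∈ Icc (s - τ s) s, ‖v k u‖ ≤ M := by
        intro k u hu
        refine hbound u ⟨?_, ?_⟩ k
        · have := (hτrange s hs0.le).2
          have := hu.1
          linarith
        · exact hu.2.trans (hs.2.le)
      have := key M hM s hs0 i hIcc
      calc ‖Real.exp s • g s + Real.exp s • v i s‖
          = ‖Real.exp s • (v i s + g s)‖ := by rw [← smul_add, add_comm]
        _ = Real.exp s * ‖v i s + g s‖ := by
            rw [norm_smul, Real.norm_eq_abs, abs_of_pos (Real.exp_pos s)]
        _ ≤ Real.exp s * M := mul_le_mul_of_nonneg_left this (Real.exp_pos s).le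
        _ = M * Real.exp s := mul_comm _ _
    have hmain := image_norm_le_of_norm_deriv_right_le_deriv_boundary hfc hfd hfa hB hbd htab
    have hft : ‖f t‖ = Real.exp t * ‖v i t‖ := by
      rw [hf]
      simp [norm_smul, Real.norm_eq_abs, abs_of_pos (Real.exp_pos t)]
    rw [hft] at hmain
    have het : (0:ℝ) < Real.exp t := Real.exp_pos t
    rw [Real.exp_sub]
    rw [div_mul_eq_mul_div, sub_div' het.ne', le_div_iff₀ het] at *
    nlinarith [hmain]
  -- limit a → 0
  have gron0 : ∀ (M : ℝ), Rv ≤ M → ∀ b : ℝ,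
      (∀ s ∈ Icc (-τ₀) b, ∀ k : Fin N, ‖v k s‖ ≤ M) →
      ∀ i : Fin N, ∀ t ∈ Ioc (0:ℝ) b,
        ‖v i t‖ ≤ M - Real.exp (-t) * (M - Rv) := by
    intro M hMRv b hbound i t htb
    have hM : 0 ≤ M := hRv0.trans hMRv
    have h0mem : (0:ℝ) ∈ Ici (-τ₀) := by simp [hτ0pos.le]
    -- continuity of a ↦ ‖v i a‖ as a → 0⁺
    have hc : Filter.Tendsto (fun a => ‖v i a‖) (nhdsWithin 0 (Ioi (0:ℝ)))
        (nhds ‖v i 0‖) := by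
      have h1 : Filter.Tendsto (v i) (nhdsWithin 0 (Ici (-τ₀))) (nhds (v i 0)) :=
        (hcont i).2 0 h0mem
      exact (h1.mono_left (nhdsWithin_mono 0 (fun u (hu : u ∈ Ioi (0:ℝ)) => (show -τ₀ ≤ u from le_trans (by linarith) (le_of_lt (mem_Ioi.mp hu)))))).norm
    have hlim : Filter.Tendsto (fun a => M - Real.exp (a - t) * (M - ‖v i a‖))
        (nhdsWithin 0 (Ioi (0:ℝ)))
        (nhds (M - Real.exp (0 - t) * (M - ‖v i 0‖))) := by
      refine Filter.Tendsto.const_sub M (Filter.Tendsto.mul ?_ (Filter.Tendsto.const_sub M hc))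
      exact (Real.continuous_exp.tendsto _).comp
        ((continuous_id.sub continuous_const).tendsto 0) |>.mono_left nhdsWithin_le_nhds
    have hev : ∀ᶠ a in nhdsWithin 0 (Ioi (0:ℝ)),
        ‖v i t‖ ≤ M - Real.exp (a - t) * (M - ‖v i a‖) := by
      filter_upwards [Ioo_mem_nhdsGT htb.1] with a haI
      exact gron M hM a b haI.1 hbound i t ⟨haI.2.le, htb.2⟩
    have hle := ge_of_tendsto hlim hev
    have h1 : ‖v i 0‖ ≤ Rv := hinit 0 ⟨neg_nonpos.mpr hτ0pos.le, le_refl 0⟩ i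
    calc ‖v i t‖ ≤ M - Real.exp (0 - t) * (M - ‖v i 0‖) := hle
      _ ≤ M - Real.exp (-t) * (M - Rv) := by
          rw [zero_sub]
          have := Real.exp_pos (-t)
          nlinarith
  -- main bootstrap
  have main : ∀ ε : ℝ, 0 < ε → ∀ T : ℝ, 0 ≤ T →
      ∀ s ∈ Icc (-τ₀) T, ∀ k : Fin N, ‖v k s‖ ≤ Rv + ε := by
    intro ε hε
    set M := Rv + ε with hMdef
    by_contra hcon
    push_neg at hcon
    obtain ⟨T, hT0, s0, hs0, k0, hk0⟩ := hcon
    set P : ℝ → Prop := fun T => ∀ s ∈ Icc (-τ₀) T, ∀ k : Fin N, ‖v k s‖ ≤ M with hP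
    have hPmono : ∀ T T' : ℝ, T' ≤ T → P T → P T' := fun T T' hTT hPT s hs k =>
      hPT s ⟨hs.1, hs.2.trans hTT⟩ k
    set Bad : Set ℝ := {T | 0 ≤ T ∧ ¬ P T} with hBadDef
    have hBadne : Bad.Nonempty := ⟨T, hT0, fun hPT => not_lt.mpr (hPT s0 hs0 k0) hk0⟩
    have hBadbdd : BddBelow Bad := ⟨0, fun T hT => hT.1⟩
    set T₁ := sInf Bad with hT₁def
    have hT₁0 : 0 ≤ T₁ := le_csInf hBadne (fun T hT => hT.1)
    have hPlt : ∀ T, 0 ≤ T → T < T₁ → P T := by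
      intro T h0 hlt
      by_contra hnP
      exact absurd (csInf_le hBadbdd ⟨h0, hnP⟩) (not_le.mpr hlt)
    have HT₁ : P T₁ := by
      intro s hs k
      rcases le_or_gt s 0 with hsle | hsgt
      · exact (hinit s ⟨hs.1, hsle⟩ k).trans (by linarith)
      · rcases lt_or_eq_of_le hs.2 with hlt | heq
        · exact hPlt s hsgt.le hlt s ⟨hs.1, le_refl s⟩ k
        · have hne : (nhdsWithin s (Ioo 0 s)).NeBot := right_nhdsWithin_Ioo_neBot hsgt
          have htend : Filter.Tendsto (fun a => ‖v k a‖) (nhdsWithin s (Ioo 0 s))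
              (nhds ‖v k s‖) := by
            have h1 : ContinuousWithinAt (v k) (Ici (-τ₀)) s :=
              (hcont k).2 s (le_trans (by linarith) hsgt.le)
            exact (h1.mono_left (nhdsWithin_mono s
              (fun u hu => le_trans (by linarith) hu.1.le))).norm
          refine le_of_tendsto htend ?_
          filter_upwards [eventually_mem_nhdsWithin] with a ha
          exact hPlt a ha.1.le (heq ▸ ha.2) a ⟨le_trans (by linarith) ha.1.le, le_refl a⟩ k
    set c := Real.exp (-(T₁ + 1)) with hcdef
    have hcpos : 0 < c := Real.exp_pos _
    set η := c * ε with hηdef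
    have hηpos : 0 < η := mul_pos hcpos hε
    set M' := M + η with hM'def
    have hev : ∀ᶠ s in nhdsWithin T₁ (Ici T₁), ∀ k : Fin N, ‖v k s‖ < M' := by
      rw [Filter.eventually_all]
      intro k
      have h1 : Filter.Tendsto (fun a => ‖v k a‖) (nhdsWithin T₁ (Ici T₁))
          (nhds ‖v k T₁‖) := by
        have h2 : ContinuousWithinAt (v k) (Ici (-τ₀)) T₁ :=
          (hcont k).2 T₁ (le_trans (by linarith) hT₁0)
        exact (h2.mono_left (nhdsWithin_mono T₁
          (fun u (hu : u ∈ Ici T₁) => (show -τ₀ ≤ u from le_trans (by linarith) (mem_Ici.mp hu))))).norm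
      refine h1.eventually_lt_const ?_
      have := HT₁ T₁ ⟨le_trans (by linarith) hT₁0, le_refl T₁⟩ k
      linarith
    obtain ⟨b', hb', hIccsub⟩ := mem_nhdsGE_iff_exists_Icc_subset.mp hev
    set b := min b' (T₁ + 1) with hbdef
    have hbT₁ : T₁ < b := lt_min hb' (by linarith)
    have hbpos : 0 < b := lt_of_le_of_lt hT₁0 hbT₁
    have hHb : ∀ s ∈ Icc (-τ₀) b, ∀ k : Fin N, ‖v k s‖ ≤ M' := by
      intro s hs k
      rcases le_or_gt s T₁ with h1 | h1
      · exact (HT₁ s ⟨hs.1, h1⟩ k).trans (by linarith)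
      · exact (hIccsub ⟨h1.le, hs.2.trans (min_le_left _ _)⟩ k).le
    have hPb : P b := by
      intro s hs k
      rcases le_or_gt s 0 with h1 | h1
      · exact (hinit s ⟨hs.1, h1⟩ k).trans (by linarith)
      · have h2 := gron0 M' (by simp only [hM'def, hMdef]; linarith) b hHb k s ⟨h1, hs.2⟩
        have hsb : s ≤ T₁ + 1 := hs.2.trans (min_le_right _ _)
        have hes : c ≤ Real.exp (-s) := Real.exp_le_exp.mpr (by linarith)
        have hex : 0 < Real.exp (-s) := Real.exp_pos _
        have hMM : M' - Rv = ε + η := by simp only [hM'def, hMdef]; ring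
        rw [hMM] at h2
        have h3 : η ≤ Real.exp (-s) * (ε + η) := by
          calc η = c * ε := hηdef
            _ ≤ Real.exp (-s) * ε := mul_le_mul_of_nonneg_right hes hε.le
            _ ≤ Real.exp (-s) * (ε + η) := mul_le_mul_of_nonneg_left (by linarith) hex.le
        have h4 : M' = M + η := hM'def
        linarith
    have hcontra : b ≤ T₁ := by
      rw [hT₁def]
      refine le_csInf hBadne fun T₂ hT₂ => ?_
      by_contra hbT
      push_neg at hbT
      exact hT₂.2 (hPmono b T₂ hbT.le hPb)
    linarith
  intro t ht i
  rcases le_or_gt t 0 with h0 | h0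
  · exact hinit t ⟨ht, h0⟩ i
  · refine le_of_forall_pos_le_add fun ε hε => ?_
    exact main ε hε t h0.le t ⟨ht, le_refl t⟩ i
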